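/- The insertion operator s on Hochschild chains of Hilbert-Schmidt operators, which inserts a rank-one idempotent elementary factor at the first gap, is an isometry on gapped elementary chains: for any continuous Hochschild chain K supported on elementary chains with a gap, ‖sK‖ = ‖K‖ in the L² norm of C_p(HS). -/

import Mathlib

noncomputable section

open Classical

/-- An elementary Hilbert-Schmidt kernel symbol `e_α^i × ē_β^j`, encoded as the
pair `((α,i),(β,j))`. -/
abbrev Elem (A N : Type*) := (A × N) × (A × N)

variable {A N : Type*}

/-- An elementary `p`-chain (tuple of `p+1` elementary kernels) has an `r`-gap if
the second index pair of the `r`-th factor differs from the first index pair of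
the `(r+1)`-th factor (cyclically). -/
def Gapped {p : ℕ} (e : Fin (p + 1) → Elem A N) : Prop :=
  ∃ r : Fin (p + 1), (e r).2 ≠ (e (r + 1)).1

/-- The position of the first gap of an elementary chain (arbitrary if there is
no gap). -/
def gapIdx {p : ℕ} (e : Fin (p + 1) → Elem A N) : Fin (p + 1) :=
  if h : (Finset.univ.filter fun r : Fin (p + 1) => (e r).2 ≠ (e (r + 1)).1).Nonempty
  then (Finset.univ.filter fun r : Fin (p + 1) => (e r).2 ≠ (e (r + 1)).1).min' h
  else 0

/-- The insertion map underlying the homotopy operator `s`: it inserts the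
idempotent elementary factor `e_{β_r}^{j_r} × ē_{β_r}^{j_r}` after the position
`r` of the first gap. -/
def insTup {p : ℕ} (e : Fin (p + 1) → Elem A N) : Fin (p + 2) → Elem A N :=
  fun j =>
    if hj : (j : ℕ) ≤ (gapIdx e : ℕ) then
      e ⟨(j : ℕ), Nat.lt_of_le_of_lt hj (gapIdx e).isLt⟩
    else if (j : ℕ) = (gapIdx e : ℕ) + 1 then ((e (gapIdx e)).2, (e (gapIdx e)).2)
    else e ⟨(j : ℕ) - 1, by have := j.isLt; omega⟩

section Aux

variable {p : ℕ}

lemma gapIdx_nonempty {e : Fin (p + 1) → Elem A N} (he : Gapped e) :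
    (Finset.univ.filter fun r : Fin (p + 1) => (e r).2 ≠ (e (r + 1)).1).Nonempty := by
  obtain ⟨r, hr⟩ := he
  exact ⟨r, by simp [hr]⟩

lemma gapIdx_spec {e : Fin (p + 1) → Elem A N} (he : Gapped e) :
    (e (gapIdx e)).2 ≠ (e (gapIdx e + 1)).1 := by
  have hne := gapIdx_nonempty he
  rw [gapIdx, dif_pos hne]
  have := Finset.min'_mem _ hne
  simpa using this

lemma gapIdx_min {e : Fin (p + 1) → Elem A N} (he : Gapped e) {i : Fin (p + 1)}
    (hi : i < gapIdx e) : (e i).2 = (e (i + 1)).1 := by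
  have hne := gapIdx_nonempty he
  by_contra h
  rw [gapIdx, dif_pos hne] at hi
  exact absurd (Finset.min'_le _ i (by simp [h])) (not_le.mpr hi)

/-- No gap of `insTup e` at positions `≤ gapIdx e`. -/
lemma insTup_no_small_gap {e : Fin (p + 1) → Elem A N} (he : Gapped e)
    {j : Fin (p + 2)} (hj : (j : ℕ) ≤ (gapIdx e : ℕ)) :
    ((insTup e) j).2 = ((insTup e) (j + 1)).1 := by
  set r : ℕ := (gapIdx e : ℕ) with hr
  have hrlt : r < p + 1 := (gapIdx e).isLt
  have hjlt : (j : ℕ) < p + 1 := lt_of_le_of_lt hj hrlt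
  have hsucc : ((j + 1 : Fin (p + 2)) : ℕ) = (j : ℕ) + 1 := by
    have : (j : ℕ) + 1 < p + 2 := by omega
    simp [Fin.add_def, Nat.mod_eq_of_lt this]
  rcases lt_or_eq_of_le hj with hlt | heq
  · -- j < r : both are original entries, use minimality
    have h1 : insTup e j = e ⟨(j : ℕ), hjlt⟩ := by rw [insTup]; rw [dif_pos hj]
    have h2 : insTup e (j + 1) = e ⟨(j : ℕ) + 1, by omega⟩ := by
      rw [insTup]; rw [dif_pos (by omega : ((j+1 : Fin (p+2)) : ℕ) ≤ r)]
      congr 1; ext; simp [hsucc]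
    rw [h1, h2]
    have hmin := gapIdx_min he (i := ⟨(j : ℕ), hjlt⟩) (by simpa [Fin.lt_def, ← hr] using hlt)
    have hadd : (⟨(j : ℕ), hjlt⟩ : Fin (p + 1)) + 1 = ⟨(j : ℕ) + 1, by omega⟩ := by
      ext; simp [Fin.add_def, Nat.mod_eq_of_lt (show (j:ℕ)+1 < p+1 by omega)]
    rw [hadd] at hmin
    exact hmin
  · -- j = r : the inserted diagonal matches
    have h1 : insTup e j = e (gapIdx e) := by
      rw [insTup]; rw [dif_pos hj]; congr 1; ext; simp [heq, hr]
    have h2 : insTup e (j + 1) = ((e (gapIdx e)).2, (e (gapIdx e)).2) := by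
      rw [insTup]; rw [dif_neg (by omega), if_pos (by omega)]
    rw [h1, h2]

lemma insTup_gap_at {e : Fin (p + 1) → Elem A N} (he : Gapped e) :
    ((insTup e) ⟨(gapIdx e : ℕ) + 1, by omega⟩).2 ≠
      ((insTup e) (⟨(gapIdx e : ℕ) + 1, by omega⟩ + 1)).1 := by
  set r : ℕ := (gapIdx e : ℕ) with hr
  have hrlt : r < p + 1 := (gapIdx e).isLt
  have h1 : insTup e ⟨r + 1, by omega⟩ = ((e (gapIdx e)).2, (e (gapIdx e)).2) := by
    rw [insTup]; rw [dif_neg (by simp [hr]), if_pos (by simp [hr])]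
  have hspec := gapIdx_spec he
  rcases Nat.lt_or_ge (r + 1) (p + 1) with hcase | hcase
  · -- no wrap
    have hsucc : (⟨r + 1, by omega⟩ + 1 : Fin (p + 2)) = ⟨r + 2, by omega⟩ := by
      ext; simp [Fin.add_def, Nat.mod_eq_of_lt (show r+2 < p+2 by omega)]
    have h2 : insTup e (⟨r + 1, by omega⟩ + 1) = e ⟨r + 1, hcase⟩ := by
      rw [hsucc, insTup]; rw [dif_neg (by simp [hr]), if_neg (by simp [hr])]
      congr 1
    have hadd : gapIdx e + 1 = (⟨r + 1, hcase⟩ : Fin (p + 1)) := by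
      ext; simp [Fin.add_def, Nat.mod_eq_of_lt hcase, ← hr]
    rw [h1, h2]
    rw [hadd] at hspec
    simpa using hspec
  · -- r = p : wraps to 0
    have hrp : r = p := by omega
    have hsucc : (⟨r + 1, by omega⟩ + 1 : Fin (p + 2)) = ⟨0, by omega⟩ := by
      ext; simp [Fin.add_def, hrp]
    have h2 : insTup e (⟨r + 1, by omega⟩ + 1) = e ⟨0, by omega⟩ := by
      rw [hsucc, insTup]; rw [dif_pos (by simp)]
    have hadd : gapIdx e + 1 = (⟨0, by omega⟩ : Fin (p + 1)) := by
      ext; simp [Fin.add_def, ← hr, hrp]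
    rw [h1, h2]
    rw [hadd] at hspec
    simpa using hspec

lemma gapIdx_insTup {e : Fin (p + 1) → Elem A N} (he : Gapped e) :
    gapIdx (insTup e) = ⟨(gapIdx e : ℕ) + 1, by omega⟩ := by
  set t := insTup e
  have hmem : (⟨(gapIdx e : ℕ) + 1, by omega⟩ : Fin (p + 2)) ∈
      Finset.univ.filter fun j : Fin (p + 2) => (t j).2 ≠ (t (j + 1)).1 := by
    simp only [Finset.mem_filter, Finset.mem_univ, true_and]
    exact insTup_gap_at he
  have hne : (Finset.univ.filter fun j : Fin (p + 2) => (t j).2 ≠ (t (j + 1)).1).Nonempty :=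
    ⟨_, hmem⟩
  rw [gapIdx, dif_pos hne]
  apply le_antisymm (Finset.min'_le _ _ hmem)
  rw [Fin.le_def]
  by_contra hcon
  push_neg at hcon
  have hmem' := Finset.min'_mem _ hne
  simp only [Finset.mem_filter, Finset.mem_univ, true_and] at hmem'
  exact hmem' (insTup_no_small_gap he (by simpa using Nat.lt_succ_iff.mp hcon))

lemma insTup_decode {e : Fin (p + 1) → Elem A N} (j : Fin (p + 1)) :
    e j = if h : (j : ℕ) ≤ (gapIdx e : ℕ) then insTup e ⟨(j : ℕ), by omega⟩
          else insTup e ⟨(j : ℕ) + 1, by omega⟩ := by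
  split_ifs with h
  · rw [insTup]; rw [dif_pos (by simpa using h)]
  · rw [insTup]; rw [dif_neg (by simp only [Fin.val_mk]; omega), if_neg (by simp only [Fin.val_mk]; omega)]
    congr 1

lemma insTup_injOn {e e' : Fin (p + 1) → Elem A N} (he : Gapped e) (he' : Gapped e')
    (h : insTup e = insTup e') : e = e' := by
  have hg : gapIdx e = gapIdx e' := by
    have := (gapIdx_insTup he).symm.trans ((congrArg gapIdx h).trans (gapIdx_insTup he'))
    have := congrArg Fin.val this
    simp only at this
    exact Fin.ext (by omega)
  funext j
  rw [insTup_decode (e := e) j, insTup_decode (e := e') j, hg, h]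

end Aux

/-- The homotopy operator `s` applied to an `ℓ²` chain `K` supported on gapped
elementary chains: on an elementary chain whose first gap is at position `r`, it
inserts the idempotent factor after position `r` and multiplies by `(−1)^r`. -/
def sOp {p : ℕ} (K : (Fin (p + 1) → Elem A N) → ℂ) :
    (Fin (p + 2) → Elem A N) → ℂ :=
  fun t =>
    if h : ∃ e : Fin (p + 1) → Elem A N, Gapped e ∧ insTup e = t then
      ((-1 : ℂ) ^ ((gapIdx h.choose : Fin (p + 1)) : ℕ)) * K h.choose
    else 0

/-- **The insertion operator `s` is an isometry on gapped chains**: for any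
square-summable (continuous Hochschild) chain `K` supported on gapped elementary
chains, `‖sK‖ = ‖K‖` in the `L²` norm of `C_p(HS)` (here: equality of the sums
of the squares of the coefficients). -/
theorem sOp_isometry {p : ℕ} (K : (Fin (p + 1) → Elem A N) → ℂ)
    (hsum : Summable fun e => ‖K e‖ ^ 2)
    (hsupp : ∀ e, K e ≠ 0 → Gapped e) :
    ∑' t : Fin (p + 2) → Elem A N, ‖sOp K t‖ ^ 2 =
      ∑' e : Fin (p + 1) → Elem A N, ‖K e‖ ^ 2 := by
  have hKne : ∀ e ∈ Function.support fun e => ‖K e‖ ^ 2, K e ≠ 0 := by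
    intro e he
    simp only [Function.mem_support] at he
    intro h0
    simp [h0] at he
  refine tsum_eq_tsum_of_ne_zero_bij
    (fun e => insTup (e : Fin (p + 1) → Elem A N)) ?_ ?_ ?_
  · rintro ⟨e, he⟩ ⟨e', he'⟩ h
    exact Subtype.ext (insTup_injOn (hsupp e (hKne e he)) (hsupp e' (hKne e' he')) h)
  · rintro t ht
    simp only [Function.mem_support] at ht
    rw [sOp] at ht
    by_cases h : ∃ e : Fin (p + 1) → Elem A N, Gapped e ∧ insTup e = t
    · rw [dif_pos h] at ht
      have hK : K h.choose ≠ 0 := by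
        intro h0
        simp [h0] at ht
      refine ⟨⟨h.choose, by simp [Function.mem_support, hK]⟩, h.choose_spec.2⟩
    · rw [dif_neg h] at ht
      simp at ht
  · rintro ⟨e, he⟩
    have hge : Gapped e := hsupp e (hKne e he)
    have h : ∃ e' : Fin (p + 1) → Elem A N, Gapped e' ∧ insTup e' = insTup e :=
      ⟨e, hge, rfl⟩
    have hce : h.choose = e :=
      insTup_injOn h.choose_spec.1 hge h.choose_spec.2
    simp only [sOp, dif_pos h, hce]
    simp [norm_mul]


end
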